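/- The measures β_t = e^{-t} Σ_{k∈ℤ} f_k(t/2) δ_k on ℤ (where f_k is the modified Bessel function of the first kind) form a convolution semigroup: β_s * β_t = β_{s+t} for all s, t > 0. -/
import Mathlib


/-- The modified Bessel function of the first kind at integer order `k`,
`f_k(t) = Σ_{p≥0} t^{|k|+2p} / ((|k|+p)! p!)`. -/
noncomputable def besselI (k : ℤ) (t : ℝ) : ℝ :=
  ∑' p : ℕ, t ^ (k.natAbs + 2 * p) / ((k.natAbs + p).factorial * p.factorial)

open MeasureTheory

/-- The measure `β_t = e^{-t} Σ_{k∈ℤ} f_k(t/2) δ_k` on `ℤ`. -/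
noncomputable def betaMeasure (t : ℝ) : Measure ℤ :=
  Measure.sum fun k : ℤ =>
    (ENNReal.ofReal (Real.exp (-t) * besselI k (t / 2))) • Measure.dirac k

open scoped ENNReal

namespace BetaConvAux

/-- Basic building block: `X^(m+n) / (m! n!)`. -/
noncomputable def F (X : ℝ≥0∞) (m n : ℕ) : ℝ≥0∞ :=
  X ^ (m + n) / ((m.factorial : ℝ≥0∞) * (n.factorial : ℝ≥0∞))

/-- Quadruple building block. -/
noncomputable def G (X Y : ℝ≥0∞) (a b c d : ℕ) : ℝ≥0∞ :=
  X ^ (a + b) * Y ^ (c + d) /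
    ((a.factorial : ℝ≥0∞) * (b.factorial : ℝ≥0∞) *
      (c.factorial : ℝ≥0∞) * (d.factorial : ℝ≥0∞))

lemma fac_ne_zero (m : ℕ) : (m.factorial : ℝ≥0∞) ≠ 0 := by
  exact_mod_cast m.factorial_ne_zero

lemma fac_ne_top (m : ℕ) : (m.factorial : ℝ≥0∞) ≠ ⊤ := ENNReal.natCast_ne_top _

lemma div_mul_div'' {u v p q : ℝ≥0∞} (hp0 : p ≠ 0) (hq0 : q ≠ 0) :
    u / p * (v / q) = u * v / (p * q) := by
  rw [div_eq_mul_inv, div_eq_mul_inv, div_eq_mul_inv,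
    ENNReal.mul_inv (Or.inl hp0) (Or.inr hq0)]
  ring

lemma F_mul_F (X Y : ℝ≥0∞) (a b c d : ℕ) : F X a b * F Y c d = G X Y a b c d := by
  rw [F, F, G, div_mul_div'' (mul_ne_zero (fac_ne_zero a) (fac_ne_zero b))
    (mul_ne_zero (fac_ne_zero c) (fac_ne_zero d))]
  congr 1
  ring

/-- The index set of quadruples `(a,b,c,d)` with `a + c - b - d = k`. -/
def Q (k : ℤ) : Type := {v : ℕ × ℕ × ℕ × ℕ // (v.1 : ℤ) + v.2.2.1 - v.2.1 - v.2.2.2 = k}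

def e1 (k : ℤ) : ℤ × ℕ × ℕ ≃ Q k where
  toFun u := ⟨(u.2.1 + u.1.toNat, u.2.1 + (-u.1).toNat,
               u.2.2 + (k - u.1).toNat, u.2.2 + (-(k - u.1)).toNat), by
    push_cast; omega⟩
  invFun v := ((v.1.1 : ℤ) - v.1.2.1, v.1.1 - (v.1.1 - v.1.2.1),
               v.1.2.2.1 - (v.1.2.2.1 - v.1.2.2.2))
  left_inv := by
    rintro ⟨j, p, q⟩
    simp only [Prod.mk.injEq, true_and, and_true]
    omega
  right_inv := by
    rintro ⟨⟨a, b, c, d⟩, h⟩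
    have h' : (a : ℤ) + c - b - d = k := h
    apply Subtype.ext
    simp only [Prod.mk.injEq, true_and, and_true]
    omega

def R (k : ℤ) : Set (ℕ × ℕ × ℕ) :=
  {u | u.2.1 ≤ u.1 + k.toNat ∧ u.2.2 ≤ u.1 + (-k).toNat}

def e2 (k : ℤ) : R k ≃ Q k where
  toFun u := ⟨(u.1.2.1, u.1.2.2, u.1.1 + k.toNat - u.1.2.1, u.1.1 + (-k).toNat - u.1.2.2), by
    have h := u.2
    simp only [R, Set.mem_setOf_eq] at h
    push_cast
    omega⟩
  invFun v := ⟨((v.1.1 + v.1.2.2.1) - ((v.1.1 + v.1.2.2.1) - (v.1.2.1 + v.1.2.2.2)),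
               v.1.1, v.1.2.1), by
    have h := v.2
    simp only [R, Set.mem_setOf_eq] at h ⊢
    omega⟩
  left_inv := by
    rintro ⟨⟨p, a, b⟩, h⟩
    have h' := h
    simp only [R, Set.mem_setOf_eq] at h'
    apply Subtype.ext
    simp only [Prod.mk.injEq, true_and, and_true]
    omega
  right_inv := by
    rintro ⟨⟨a, b, c, d⟩, h⟩
    have h' : (a : ℤ) + c - b - d = k := h
    apply Subtype.ext
    simp only [Prod.mk.injEq, true_and, and_true]
    omega

lemma F_add (X Y : ℝ≥0∞) (m n : ℕ) :
    F (X + Y) m n = ∑' w : ℕ × ℕ,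
      if w.1 ≤ m ∧ w.2 ≤ n then G X Y w.1 w.2 (m - w.1) (n - w.2) else 0 := by
  rw [tsum_eq_sum (s := (Finset.range (m + 1)) ×ˢ (Finset.range (n + 1))) ?_]
  · rw [Finset.sum_product]
    have expand : F (X + Y) m n =
        ∑ a ∈ Finset.range (m + 1), ∑ b ∈ Finset.range (n + 1),
          (X ^ a * Y ^ (m - a) * (m.choose a : ℝ≥0∞)) *
            (X ^ b * Y ^ (n - b) * (n.choose b : ℝ≥0∞)) /
              ((m.factorial : ℝ≥0∞) * (n.factorial : ℝ≥0∞)) := by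
      rw [F, pow_add, add_pow, add_pow, Finset.sum_mul_sum, div_eq_mul_inv, Finset.sum_mul]
      refine Finset.sum_congr rfl fun a _ => ?_
      rw [Finset.sum_mul]
      refine Finset.sum_congr rfl fun b _ => ?_
      rw [div_eq_mul_inv]
    rw [expand]
    refine Finset.sum_congr rfl fun a ha => Finset.sum_congr rfl fun b hb => ?_
    rw [Finset.mem_range] at ha hb
    have ham : a ≤ m := by omega
    have hbn : b ≤ n := by omega
    rw [if_pos ⟨ham, hbn⟩]
    have hnat : m.factorial * n.factorial =
        (m.choose a * n.choose b) *
          (a.factorial * b.factorial * (m - a).factorial * (n - b).factorial) := by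
      rw [← Nat.choose_mul_factorial_mul_factorial ham,
        ← Nat.choose_mul_factorial_mul_factorial hbn]
      ring
    have hnum : (X ^ a * Y ^ (m - a) * (m.choose a : ℝ≥0∞)) *
        (X ^ b * Y ^ (n - b) * (n.choose b : ℝ≥0∞)) =
        ((m.choose a : ℝ≥0∞) * (n.choose b : ℝ≥0∞)) *
          (X ^ (a + b) * Y ^ ((m - a) + (n - b))) := by
      rw [pow_add, pow_add]; ring
    have hden : (m.factorial : ℝ≥0∞) * (n.factorial : ℝ≥0∞) =
        ((m.choose a : ℝ≥0∞) * (n.choose b : ℝ≥0∞)) *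
          ((a.factorial : ℝ≥0∞) * (b.factorial : ℝ≥0∞) *
            ((m - a).factorial : ℝ≥0∞) * ((n - b).factorial : ℝ≥0∞)) := by
      have := congrArg (fun x : ℕ => (x : ℝ≥0∞)) hnat
      push_cast at this
      convert this using 2
    rw [hnum, hden, ENNReal.mul_div_mul_left _ _
      (mul_ne_zero (by exact_mod_cast Nat.choose_pos ham |>.ne')
        (by exact_mod_cast Nat.choose_pos hbn |>.ne'))
      (ENNReal.mul_ne_top (ENNReal.natCast_ne_top _) (ENNReal.natCast_ne_top _))]
    rw [G]
  · intro w hw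
    rw [if_neg]
    simp only [Finset.mem_product, Finset.mem_range] at hw
    omega

lemma rhs_eq (X Y : ℝ≥0∞) (k : ℤ) :
    ∑' p : ℕ, F (X + Y) (p + k.toNat) (p + (-k).toNat) =
      ∑' v : Q k, G X Y v.1.1 v.1.2.1 v.1.2.2.1 v.1.2.2.2 := by
  calc ∑' p : ℕ, F (X + Y) (p + k.toNat) (p + (-k).toNat)
      = ∑' p : ℕ, ∑' w : ℕ × ℕ,
          if w.1 ≤ p + k.toNat ∧ w.2 ≤ p + (-k).toNat then
            G X Y w.1 w.2 (p + k.toNat - w.1) (p + (-k).toNat - w.2) else 0 :=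
        tsum_congr fun p => F_add X Y _ _
    _ = ∑' u : ℕ × ℕ × ℕ,
          if u.2.1 ≤ u.1 + k.toNat ∧ u.2.2 ≤ u.1 + (-k).toNat then
            G X Y u.2.1 u.2.2 (u.1 + k.toNat - u.2.1) (u.1 + (-k).toNat - u.2.2) else 0 := by
        rw [ENNReal.tsum_prod']
    _ = ∑' u : R k,
          if u.1.2.1 ≤ u.1.1 + k.toNat ∧ u.1.2.2 ≤ u.1.1 + (-k).toNat then
            G X Y u.1.2.1 u.1.2.2 (u.1.1 + k.toNat - u.1.2.1)
              (u.1.1 + (-k).toNat - u.1.2.2) else 0 := by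
        refine (tsum_subtype_eq_of_support_subset fun u hu => ?_).symm
        by_contra hmem
        exact hu (if_neg fun hc => hmem hc)
    _ = ∑' u : R k,
          G X Y u.1.2.1 u.1.2.2 (u.1.1 + k.toNat - u.1.2.1) (u.1.1 + (-k).toNat - u.1.2.2) :=
        tsum_congr fun u => if_pos u.2
    _ = ∑' v : Q k, G X Y v.1.1 v.1.2.1 v.1.2.2.1 v.1.2.2.2 :=
        (e2 k).tsum_eq (f := fun v : Q k => G X Y v.1.1 v.1.2.1 v.1.2.2.1 v.1.2.2.2)

lemma lhs_eq (X Y : ℝ≥0∞) (k : ℤ) :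
    (∑' j : ℤ, (∑' p : ℕ, F X (p + j.toNat) (p + (-j).toNat)) *
        (∑' q : ℕ, F Y (q + (k - j).toNat) (q + (-(k - j)).toNat))) =
      ∑' v : Q k, G X Y v.1.1 v.1.2.1 v.1.2.2.1 v.1.2.2.2 := by
  calc (∑' j : ℤ, (∑' p : ℕ, F X (p + j.toNat) (p + (-j).toNat)) *
        (∑' q : ℕ, F Y (q + (k - j).toNat) (q + (-(k - j)).toNat)))
      = ∑' j : ℤ, ∑' p : ℕ, ∑' q : ℕ,
          F X (p + j.toNat) (p + (-j).toNat) *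
            F Y (q + (k - j).toNat) (q + (-(k - j)).toNat) := by
        refine tsum_congr fun j => ?_
        rw [← ENNReal.tsum_mul_right]
        exact tsum_congr fun p => (ENNReal.tsum_mul_left).symm
    _ = ∑' u : ℤ × ℕ × ℕ,
          F X (u.2.1 + u.1.toNat) (u.2.1 + (-u.1).toNat) *
            F Y (u.2.2 + (k - u.1).toNat) (u.2.2 + (-(k - u.1)).toNat) := by
        rw [ENNReal.tsum_prod']
        exact tsum_congr fun j => (ENNReal.tsum_prod').symm ▸ rfl
    _ = ∑' u : ℤ × ℕ × ℕ,
          G X Y (u.2.1 + u.1.toNat) (u.2.1 + (-u.1).toNat)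
            (u.2.2 + (k - u.1).toNat) (u.2.2 + (-(k - u.1)).toNat) :=
        tsum_congr fun u => F_mul_F X Y _ _ _ _
    _ = ∑' v : Q k, G X Y v.1.1 v.1.2.1 v.1.2.2.1 v.1.2.2.2 :=
        (e1 k).tsum_eq (f := fun v : Q k => G X Y v.1.1 v.1.2.1 v.1.2.2.1 v.1.2.2.2)

lemma key (X Y : ℝ≥0∞) (k : ℤ) :
    (∑' j : ℤ, (∑' p : ℕ, F X (p + j.toNat) (p + (-j).toNat)) *
        (∑' q : ℕ, F Y (q + (k - j).toNat) (q + (-(k - j)).toNat))) =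
      ∑' p : ℕ, F (X + Y) (p + k.toNat) (p + (-k).toNat) :=
  (lhs_eq X Y k).trans (rhs_eq X Y k).symm

lemma summable_bessel (k : ℤ) {x : ℝ} (hx : 0 ≤ x) :
    Summable (fun p : ℕ =>
      x ^ (k.natAbs + 2 * p) / ((k.natAbs + p).factorial * p.factorial : ℝ)) := by
  refine Summable.of_nonneg_of_le (fun p => by positivity) (fun p => ?_)
    ((Real.summable_pow_div_factorial (x ^ 2)).mul_left (x ^ k.natAbs))
  have h1 : x ^ (k.natAbs + 2 * p) = x ^ k.natAbs * (x ^ 2) ^ p := by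
    rw [← pow_mul, ← pow_add]
  have hfac : (1 : ℝ) ≤ ((k.natAbs + p).factorial : ℝ) := by
    exact_mod_cast (k.natAbs + p).factorial_pos
  have hp : (0 : ℝ) < (p.factorial : ℝ) := by exact_mod_cast p.factorial_pos
  calc x ^ (k.natAbs + 2 * p) / ((k.natAbs + p).factorial * p.factorial : ℝ)
      ≤ x ^ (k.natAbs + 2 * p) / (1 * (p.factorial : ℝ)) := by
        gcongr

    _ = x ^ k.natAbs * ((x ^ 2) ^ p / (p.factorial : ℝ)) := by
        rw [one_mul, h1, mul_div_assoc]

lemma ofReal_besselI (k : ℤ) {x : ℝ} (hx : 0 ≤ x) :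
    ENNReal.ofReal (besselI k x) =
      ∑' p : ℕ, F (ENNReal.ofReal x) (p + k.toNat) (p + (-k).toNat) := by
  rw [besselI, ENNReal.ofReal_tsum_of_nonneg (fun p => by positivity) (summable_bessel k hx)]
  refine tsum_congr fun p => ?_
  have hden : (0 : ℝ) < ((k.natAbs + p).factorial * p.factorial : ℝ) := by positivity
  rw [ENNReal.ofReal_div_of_pos hden, ENNReal.ofReal_pow hx, F]
  have hof : ENNReal.ofReal (((k.natAbs + p).factorial : ℝ) * (p.factorial : ℝ)) =
      ((k.natAbs + p).factorial : ℝ≥0∞) * (p.factorial : ℝ≥0∞) := by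
    rw [ENNReal.ofReal_mul (by positivity)]
    simp [ENNReal.ofReal_natCast]
  rw [hof]
  rcases le_or_gt 0 k with hk | hk
  · have e1 : p + k.toNat = k.natAbs + p := by omega
    have e2 : p + (-k).toNat = p := by omega
    have e3 : k.natAbs + 2 * p = (p + k.toNat) + (p + (-k).toNat) := by omega
    rw [e3, e1, e2]
  · have e1 : p + k.toNat = p := by omega
    have e2 : p + (-k).toNat = k.natAbs + p := by omega
    have e3 : k.natAbs + 2 * p = (p + k.toNat) + (p + (-k).toNat) := by omega
    rw [e3, e1, e2, mul_comm ((p.factorial : ℝ≥0∞)) _]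

lemma betaMeasure_singleton (t : ℝ) (k : ℤ) :
    betaMeasure t {k} = ENNReal.ofReal (Real.exp (-t) * besselI k (t / 2)) := by
  rw [betaMeasure, Measure.sum_apply _ (measurableSet_singleton k)]
  have : ∀ j : ℤ,
      ((ENNReal.ofReal (Real.exp (-t) * besselI j (t / 2))) • Measure.dirac j) {k} =
        if j = k then ENNReal.ofReal (Real.exp (-t) * besselI j (t / 2)) else 0 := by
    intro j
    rw [Measure.smul_apply, Measure.dirac_apply, smul_eq_mul]
    by_cases h : j = k
    · simp [h]
    · simp [Set.indicator_apply, h]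
  rw [tsum_congr this, tsum_eq_single k (fun j hj => if_neg hj)]
  simp

instance betaMeasure_sfinite (t : ℝ) : SFinite (betaMeasure t) := by
  rw [betaMeasure]; infer_instance

lemma conv_singleton (μ ν : Measure ℤ) [SFinite μ] [SFinite ν] (k : ℤ) :
    μ.conv ν {k} = ∑' j : ℤ, μ {j} * ν {k - j} := by
  have hmeas : Measurable (fun p : ℤ × ℤ => p.1 + p.2) := measurable_of_countable _
  rw [Measure.conv, Measure.map_apply hmeas (measurableSet_singleton k)]
  have hset : (fun p : ℤ × ℤ => p.1 + p.2) ⁻¹' {k} = {p : ℤ × ℤ | p.1 + p.2 = k} := rfl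
  rw [hset, Measure.prod_apply ((Set.to_countable _).measurableSet)]
  have hfib : ∀ a : ℤ, (Prod.mk a ⁻¹' {p : ℤ × ℤ | p.1 + p.2 = k}) = {k - a} := by
    intro a
    ext b
    simp only [Set.mem_preimage, Set.mem_setOf_eq, Set.mem_singleton_iff]
    omega
  calc ∫⁻ a, ν (Prod.mk a ⁻¹' {p : ℤ × ℤ | p.1 + p.2 = k}) ∂μ
      = ∫⁻ a, ν {k - a} ∂μ := by
        refine lintegral_congr fun a => by rw [hfib a]
    _ = ∑' a : ℤ, ν {k - a} * μ {a} := lintegral_countable' _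
    _ = ∑' a : ℤ, μ {a} * ν {k - a} := tsum_congr fun a => mul_comm _ _

end BetaConvAux

open BetaConvAux in
/-- The measures `β_t` form a convolution semigroup: `β_s ∗ β_t = β_{s+t}` for `s, t > 0`. -/
theorem betaMeasure_conv (s t : ℝ) (hs : 0 < s) (ht : 0 < t) :
    MeasureTheory.Measure.conv (betaMeasure s) (betaMeasure t) = betaMeasure (s + t) := by
  refine Measure.ext_iff_singleton.mpr fun k => ?_
  rw [conv_singleton, betaMeasure_singleton]
  have hs2 : (0 : ℝ) ≤ s / 2 := by linarith
  have ht2 : (0 : ℝ) ≤ t / 2 := by linarith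
  have hst2 : (0 : ℝ) ≤ (s + t) / 2 := by linarith
  set X := ENNReal.ofReal (s / 2) with hX
  set Y := ENNReal.ofReal (t / 2) with hY
  have hXY : ENNReal.ofReal ((s + t) / 2) = X + Y := by
    rw [hX, hY, ← ENNReal.ofReal_add hs2 ht2]
    ring_nf
  have hexp : ENNReal.ofReal (Real.exp (-(s + t))) =
      ENNReal.ofReal (Real.exp (-s)) * ENNReal.ofReal (Real.exp (-t)) := by
    rw [← ENNReal.ofReal_mul (Real.exp_nonneg _), ← Real.exp_add]
    ring_nf
  calc ∑' j : ℤ, betaMeasure s {j} * betaMeasure t {k - j}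
      = ∑' j : ℤ, (ENNReal.ofReal (Real.exp (-s)) * ENNReal.ofReal (Real.exp (-t))) *
          ((∑' p : ℕ, F X (p + j.toNat) (p + (-j).toNat)) *
            (∑' q : ℕ, F Y (q + (k - j).toNat) (q + (-(k - j)).toNat))) := by
        refine tsum_congr fun j => ?_
        rw [betaMeasure_singleton, betaMeasure_singleton,
          ENNReal.ofReal_mul (Real.exp_nonneg _), ENNReal.ofReal_mul (Real.exp_nonneg _),
          ofReal_besselI j hs2, ofReal_besselI (k - j) ht2, ← hX, ← hY]
        ring
    _ = ENNReal.ofReal (Real.exp (-(s + t))) *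
          ∑' j : ℤ, ((∑' p : ℕ, F X (p + j.toNat) (p + (-j).toNat)) *
            (∑' q : ℕ, F Y (q + (k - j).toNat) (q + (-(k - j)).toNat))) := by
        rw [ENNReal.tsum_mul_left, hexp]
    _ = ENNReal.ofReal (Real.exp (-(s + t))) *
          ∑' p : ℕ, F (X + Y) (p + k.toNat) (p + (-k).toNat) := by rw [key]
    _ = ENNReal.ofReal (Real.exp (-(s + t)) * besselI k ((s + t) / 2)) := by
        rw [ENNReal.ofReal_mul (Real.exp_nonneg _), ofReal_besselI k hst2, hXY]
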